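/- (Sampling lemma for junta testing) Let p be a probability distribution on Z₄ⁿ such that for every T ⊆ [n] with |T| ≤ k, Pr_{x∼p}[supp(x) ⊆ T] ≤ 1−δ. If x₁,…,x_m are i.i.d. samples from p, then Pr[|∪_{j=1}^m supp(x_j)| ≤ k] ≤ C(m,k)·(1−δ)^{m−k}, where C(m,k) is the binomial coefficient. -/

import Mathlib

open Matrix

/-- Support of a string in Z₄ⁿ. -/
def psupp {n : ℕ} (x : Fin n → Fin 4) : Finset (Fin n) :=
  Finset.univ.filter (fun i => x i ≠ 0)

open scoped Classical


/-- Existence of a covering index set of size exactly `k`. -/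
lemma junta_exists_good {n k m : ℕ} (hm : 0 < m) (hkm : k ≤ m)
    (xs : Fin m → Fin n → Fin 4)
    (h : (Finset.univ.biUnion fun j => psupp (xs j)).card ≤ k) :
    ∃ J : Finset (Fin m), J.card = k ∧
      (J.biUnion fun i => psupp (xs i)).card ≤ k ∧
      ∀ j ∉ J, psupp (xs j) ⊆ J.biUnion fun i => psupp (xs i) := by
  set U := Finset.univ.biUnion fun j => psupp (xs j) with hU
  have hmem : ∀ i ∈ U, ∃ j, i ∈ psupp (xs j) := by
    intro i hi
    simpa [hU, Finset.mem_biUnion] using hi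
  let g : Fin n → Fin m := fun i =>
    if h : ∃ j, i ∈ psupp (xs j) then h.choose else ⟨0, hm⟩
  have hg : ∀ i ∈ U, i ∈ psupp (xs (g i)) := by
    intro i hi
    have hex : ∃ j, i ∈ psupp (xs j) := hmem i hi
    simp only [g, dif_pos hex]
    exact hex.choose_spec
  have hcard0 : (U.image g).card ≤ k := le_trans (Finset.card_image_le) h
  obtain ⟨J, hJ0, hJcard⟩ := Finset.exists_superset_card_eq hcard0 (by simpa using hkm)
  have hsub : ∀ j : Fin m, psupp (xs j) ⊆ U := by
    intro j a ha
    exact Finset.mem_biUnion.2 ⟨j, Finset.mem_univ j, ha⟩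
  have hUeq : (J.biUnion fun i => psupp (xs i)) = U := by
    apply Finset.Subset.antisymm
    · intro a ha
      obtain ⟨i, _, hai⟩ := Finset.mem_biUnion.1 ha
      exact hsub i hai
    · intro a ha
      exact Finset.mem_biUnion.2 ⟨g a, hJ0 (Finset.mem_image_of_mem g ha), hg a ha⟩
  refine ⟨J, hJcard, ?_, ?_⟩
  · rw [hUeq]; exact h
  · intro j _
    rw [hUeq]; exact hsub j

lemma junta_prod_ite_all {ι : Type*} [Fintype ι] (Q : ι → Prop) (f : ι → ℝ) :
    (∏ j, if Q j then f j else 0) = if ∀ j, Q j then ∏ j, f j else 0 := by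
  by_cases h : ∀ j, Q j
  · simp [h]
  · rw [if_neg h]
    push_neg at h
    obtain ⟨j, hj⟩ := h
    exact Finset.prod_eq_zero (Finset.mem_univ j) (if_neg hj)

set_option maxHeartbeats 1000000 in
lemma junta_key {n k m : ℕ} {δ : ℝ} (hδ1 : δ ≤ 1)
    (p : (Fin n → Fin 4) → ℝ) (hp : ∀ x, 0 ≤ p x) (hsum : ∑ x, p x = 1)
    (hT : ∀ T : Finset (Fin n), T.card ≤ k →
      ∑ x ∈ Finset.univ.filter (fun x => psupp x ⊆ T), p x ≤ 1 - δ)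
    (J : Finset (Fin m)) (hJ : J.card = k) :
    ∑ xs : Fin m → Fin n → Fin 4,
      (if ((J.biUnion fun i => psupp (xs i)).card ≤ k ∧
           ∀ j ∉ J, psupp (xs j) ⊆ J.biUnion fun i => psupp (xs i))
        then ∏ j, p (xs j) else 0) ≤ (1 - δ) ^ (m - k) := by
  have h1δ : 0 ≤ 1 - δ := by linarith
  set e := (Equiv.piEquivPiSubtypeProd (· ∈ J) (fun _ : Fin m => Fin n → Fin 4)).symm with he
  rw [← Equiv.sum_comp e, Fintype.sum_prod_type]
  -- cardinalities
  have hcard_in : Fintype.card {x : Fin m // x ∈ J} = k := by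
    simpa using hJ
  have hcard_out : Fintype.card {x : Fin m // ¬ x ∈ J} = m - k := by
    rw [Fintype.card_subtype_compl, hcard_in, Fintype.card_fin]
  have key_y : ∀ y : {x : Fin m // x ∈ J} → Fin n → Fin 4,
      ∑ z : {x : Fin m // ¬ x ∈ J} → Fin n → Fin 4,
        (if (((J.biUnion fun i => psupp (e (y, z) i)).card ≤ k ∧
           ∀ j ∉ J, psupp (e (y, z) j) ⊆ J.biUnion fun i => psupp (e (y, z) i)))
          then ∏ j, p (e (y, z) j) else 0)
      ≤ (∏ j : {x : Fin m // x ∈ J}, p (y j)) * (1 - δ) ^ (m - k) := by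
    intro y
    set Ty : Finset (Fin n) :=
      Finset.univ.biUnion (fun i : {x : Fin m // x ∈ J} => psupp (y i)) with hTy
    have hxs_in : ∀ (z : {x : Fin m // ¬ x ∈ J} → Fin n → Fin 4) (j : Fin m)
        (hj : j ∈ J), e (y, z) j = y ⟨j, hj⟩ := by
      intro z j hj
      simp [he, Equiv.piEquivPiSubtypeProd_symm_apply, dif_pos hj]
    have hxs_out : ∀ (z : {x : Fin m // ¬ x ∈ J} → Fin n → Fin 4) (j : Fin m)
        (hj : ¬ j ∈ J), e (y, z) j = z ⟨j, hj⟩ := by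
      intro z j hj
      simp [he, Equiv.piEquivPiSubtypeProd_symm_apply, dif_neg hj]
    have hTeq : ∀ z, (J.biUnion fun i => psupp (e (y, z) i)) = Ty := by
      intro z
      ext a
      simp only [Finset.mem_biUnion, hTy, Finset.mem_univ, true_and]
      constructor
      · rintro ⟨i, hi, ha⟩
        exact ⟨⟨i, hi⟩, by rwa [hxs_in z i hi] at ha⟩
      · rintro ⟨⟨i, hi⟩, ha⟩
        exact ⟨i, hi, by rwa [hxs_in z i hi]⟩
    have hprod : ∀ z, (∏ j, p (e (y, z) j)) =
        (∏ j : {x : Fin m // x ∈ J}, p (y j)) *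
        (∏ j : {x : Fin m // ¬ x ∈ J}, p (z j)) := by
      intro z
      rw [← Fintype.prod_subtype_mul_prod_subtype (· ∈ J) (fun j => p (e (y, z) j))]
      congr 1
      · refine Finset.prod_congr ?_ fun j _ => by rw [hxs_in z j.1 j.2]
        congr!
      · refine Finset.prod_congr ?_ fun j _ => by rw [hxs_out z j.1 j.2]
        congr!
    have hcond : ∀ z, (∀ j ∉ J, psupp (e (y, z) j) ⊆ Ty) ↔
        (∀ j : {x : Fin m // ¬ x ∈ J}, psupp (z j) ⊆ Ty) := by
      intro z
      constructor
      · intro h j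
        have := h j.1 j.2
        rwa [hxs_out z j.1 j.2] at this
      · intro h j hj
        rw [hxs_out z j hj]
        exact h ⟨j, hj⟩
    have hPy : 0 ≤ ∏ j : {x : Fin m // x ∈ J}, p (y j) :=
      Finset.prod_nonneg fun j _ => hp _
    by_cases hc : Ty.card ≤ k
    · -- good case
      have hstep : ∀ z, (if (((J.biUnion fun i => psupp (e (y, z) i)).card ≤ k ∧
           ∀ j ∉ J, psupp (e (y, z) j) ⊆ J.biUnion fun i => psupp (e (y, z) i)))
          then ∏ j, p (e (y, z) j) else 0) =
          (∏ j : {x : Fin m // x ∈ J}, p (y j)) *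
          (if (∀ j : {x : Fin m // ¬ x ∈ J}, psupp (z j) ⊆ Ty)
            then ∏ j : {x : Fin m // ¬ x ∈ J}, p (z j) else 0) := by
        intro z
        simp only [hTeq z, hc, true_and]
        by_cases hz : ∀ j : {x : Fin m // ¬ x ∈ J}, psupp (z j) ⊆ Ty
        · rw [if_pos ((hcond z).2 hz), if_pos hz, hprod z]
        · rw [if_neg (fun hh => hz ((hcond z).1 hh)), if_neg hz, mul_zero]
      rw [Finset.sum_congr rfl fun z _ => hstep z, ← Finset.mul_sum]
      apply mul_le_mul_of_nonneg_left _ hPy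
      have hrw : ∀ z : {x : Fin m // ¬ x ∈ J} → Fin n → Fin 4,
          (if (∀ j : {x : Fin m // ¬ x ∈ J}, psupp (z j) ⊆ Ty)
            then ∏ j : {x : Fin m // ¬ x ∈ J}, p (z j) else 0)
          = ∏ j : {x : Fin m // ¬ x ∈ J},
              (if psupp (z j) ⊆ Ty then p (z j) else 0) := by
        intro z
        by_cases hz : ∀ j : {x : Fin m // ¬ x ∈ J}, psupp (z j) ⊆ Ty
        · rw [if_pos hz]
          exact (Finset.prod_congr rfl fun j _ => by rw [if_pos (hz j)]).symm
        · rw [if_neg hz]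
          push_neg at hz
          obtain ⟨j, hj⟩ := hz
          exact (Finset.prod_eq_zero (Finset.mem_univ j)
            (show (if psupp (z j) ⊆ Ty then p (z j) else 0) = 0 from if_neg hj)).symm
      rw [Finset.sum_congr rfl fun z _ => hrw z]
      have hfac : ∑ z : {x : Fin m // ¬ x ∈ J} → Fin n → Fin 4,
          ∏ j : {x : Fin m // ¬ x ∈ J}, (if psupp (z j) ⊆ Ty then p (z j) else 0)
          = ∏ _j : {x : Fin m // ¬ x ∈ J},
              ∑ x : Fin n → Fin 4, (if psupp x ⊆ Ty then p x else 0) := by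
        rw [Finset.prod_univ_sum (fun _ => Finset.univ)
          (fun _ x => if psupp x ⊆ Ty then p x else 0), Fintype.piFinset_univ]
      rw [hfac, Finset.prod_const]
      have hone : ∑ x : Fin n → Fin 4, (if psupp x ⊆ Ty then p x else 0) ≤ 1 - δ := by
        rw [← Finset.sum_filter]
        exact hT Ty hc
      have hzero : 0 ≤ ∑ x : Fin n → Fin 4, (if psupp x ⊆ Ty then p x else 0) :=
        Finset.sum_nonneg fun x _ => by
          by_cases h : psupp x ⊆ Ty <;> simp [h, hp x]
      calc (∑ x : Fin n → Fin 4, (if psupp x ⊆ Ty then p x else 0)) ^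
            (Finset.univ : Finset {x : Fin m // ¬ x ∈ J}).card
          ≤ (1 - δ) ^ (Finset.univ : Finset {x : Fin m // ¬ x ∈ J}).card :=
            pow_le_pow_left₀ hzero hone _
        _ = (1 - δ) ^ (m - k) := by rw [Finset.card_univ, hcard_out]
    · -- bad case: all terms vanish
      have hstep : ∀ z : {x : Fin m // ¬ x ∈ J} → Fin n → Fin 4,
          (if (((J.biUnion fun i => psupp (e (y, z) i)).card ≤ k ∧
           ∀ j ∉ J, psupp (e (y, z) j) ⊆ J.biUnion fun i => psupp (e (y, z) i)))
          then ∏ j, p (e (y, z) j) else 0) = 0 := by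
        intro z
        rw [hTeq z, if_neg (fun hh => hc hh.1)]
      rw [Finset.sum_congr rfl fun z _ => hstep z, Finset.sum_const, smul_zero]
      exact mul_nonneg hPy (pow_nonneg h1δ _)
  calc ∑ y : {x : Fin m // x ∈ J} → Fin n → Fin 4,
        ∑ z : {x : Fin m // ¬ x ∈ J} → Fin n → Fin 4,
        (if (((J.biUnion fun i => psupp (e (y, z) i)).card ≤ k ∧
           ∀ j ∉ J, psupp (e (y, z) j) ⊆ J.biUnion fun i => psupp (e (y, z) i)))
          then ∏ j, p (e (y, z) j) else 0)
      ≤ ∑ y : {x : Fin m // x ∈ J} → Fin n → Fin 4,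
          (∏ j : {x : Fin m // x ∈ J}, p (y j)) * (1 - δ) ^ (m - k) :=
        Finset.sum_le_sum fun y _ => key_y y
    _ = (∑ y : {x : Fin m // x ∈ J} → Fin n → Fin 4,
          ∏ j : {x : Fin m // x ∈ J}, p (y j)) * (1 - δ) ^ (m - k) := by
        rw [Finset.sum_mul]
    _ = (1 - δ) ^ (m - k) := by
        have h1 : ∑ y : {x : Fin m // x ∈ J} → Fin n → Fin 4,
            ∏ j : {x : Fin m // x ∈ J}, p (y j) = 1 := by
          rw [← Fintype.piFinset_univ, ← Finset.prod_univ_sum (fun _ => Finset.univ)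
            (fun _ x => p x)]
          simp [hsum]
        rw [h1, one_mul]

open scoped Classical in
/-- If every set T of at most k coordinates captures at most 1−δ of the
probability mass of p, then m i.i.d. samples from p have union of supports of size ≤ k
with probability at most C(m,k)(1−δ)^{m−k}. -/
theorem junta_sampling_lemma {n k m : ℕ} {δ : ℝ}
    (hn : 0 < n) (hk : 0 < k) (hm : 0 < m) (hkm : k ≤ m)
    (hδ0 : 0 < δ) (hδ1 : δ ≤ 1)
    (p : (Fin n → Fin 4) → ℝ)
    (hp : ∀ x, 0 ≤ p x) (hsum : ∑ x, p x = 1)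
    (hT : ∀ T : Finset (Fin n), T.card ≤ k →
      ∑ x ∈ Finset.univ.filter (fun x => psupp x ⊆ T), p x ≤ 1 - δ) :
    ∑ xs ∈ Finset.univ.filter
        (fun xs : Fin m → Fin n → Fin 4 =>
          (Finset.univ.biUnion fun j => psupp (xs j)).card ≤ k),
      ∏ j, p (xs j) ≤ (m.choose k : ℝ) * (1 - δ) ^ (m - k) := by
  have h1δ : 0 ≤ 1 - δ := by linarith
  rw [Finset.sum_filter]
  have hpoint : ∀ xs : Fin m → Fin n → Fin 4,
      (if (Finset.univ.biUnion fun j => psupp (xs j)).card ≤ k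
        then ∏ j, p (xs j) else 0)
      ≤ ∑ J ∈ Finset.powersetCard k (Finset.univ : Finset (Fin m)),
          (if ((J.biUnion fun i => psupp (xs i)).card ≤ k ∧
               ∀ j ∉ J, psupp (xs j) ⊆ J.biUnion fun i => psupp (xs i))
            then ∏ j, p (xs j) else 0) := by
    intro xs
    have hnn : ∀ J ∈ Finset.powersetCard k (Finset.univ : Finset (Fin m)),
        0 ≤ (if ((J.biUnion fun i => psupp (xs i)).card ≤ k ∧
               ∀ j ∉ J, psupp (xs j) ⊆ J.biUnion fun i => psupp (xs i))
            then ∏ j, p (xs j) else 0) := by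
      intro J _
      by_cases h : ((J.biUnion fun i => psupp (xs i)).card ≤ k ∧
               ∀ j ∉ J, psupp (xs j) ⊆ J.biUnion fun i => psupp (xs i))
      · rw [if_pos h]; exact Finset.prod_nonneg fun j _ => hp _
      · rw [if_neg h]
    by_cases hE : (Finset.univ.biUnion fun j => psupp (xs j)).card ≤ k
    · rw [if_pos hE]
      obtain ⟨J, hJcard, h1, h2⟩ := junta_exists_good hm hkm xs hE
      have hJmem : J ∈ Finset.powersetCard k (Finset.univ : Finset (Fin m)) :=
        Finset.mem_powersetCard.2 ⟨Finset.subset_univ J, hJcard⟩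
      calc ∏ j, p (xs j)
          = (if ((J.biUnion fun i => psupp (xs i)).card ≤ k ∧
               ∀ j ∉ J, psupp (xs j) ⊆ J.biUnion fun i => psupp (xs i))
            then ∏ j, p (xs j) else 0) := by rw [if_pos ⟨h1, h2⟩]
        _ ≤ _ := Finset.single_le_sum hnn hJmem
    · rw [if_neg hE]
      exact Finset.sum_nonneg hnn
  calc ∑ xs : Fin m → Fin n → Fin 4,
        (if (Finset.univ.biUnion fun j => psupp (xs j)).card ≤ k
          then ∏ j, p (xs j) else 0)
      ≤ ∑ xs : Fin m → Fin n → Fin 4,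
          ∑ J ∈ Finset.powersetCard k (Finset.univ : Finset (Fin m)),
            (if ((J.biUnion fun i => psupp (xs i)).card ≤ k ∧
                 ∀ j ∉ J, psupp (xs j) ⊆ J.biUnion fun i => psupp (xs i))
              then ∏ j, p (xs j) else 0) :=
        Finset.sum_le_sum fun xs _ => hpoint xs
    _ = ∑ J ∈ Finset.powersetCard k (Finset.univ : Finset (Fin m)),
          ∑ xs : Fin m → Fin n → Fin 4,
            (if ((J.biUnion fun i => psupp (xs i)).card ≤ k ∧
                 ∀ j ∉ J, psupp (xs j) ⊆ J.biUnion fun i => psupp (xs i))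
              then ∏ j, p (xs j) else 0) := Finset.sum_comm
    _ ≤ ∑ J ∈ Finset.powersetCard k (Finset.univ : Finset (Fin m)),
          (1 - δ) ^ (m - k) :=
        Finset.sum_le_sum fun J hJ =>
          junta_key hδ1 p hp hsum hT J (Finset.mem_powersetCard.1 hJ).2
    _ = (m.choose k : ℝ) * (1 - δ) ^ (m - k) := by
        rw [Finset.sum_const, Finset.card_powersetCard, Finset.card_univ,
          Fintype.card_fin, nsmul_eq_mul]
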